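/- Let T be a continuous linear operator on a separable Fréchet space such that the 2-fold direct sum T ⊕ T is AP-transitive: for all nonempty open U₁, U₂, V₁, V₂ ⊆ X and every m there are x_i ∈ U_i and a, k with T^{a+jk} x_i ∈ V_i for 0 ≤ j ≤ m, i = 1, 2. Then for every n ≥ 1 the n-fold direct sum T ⊕ ... ⊕ T is AP-transitive: for all nonempty open sets U₁, ..., U_n, V₁, ..., V_n and every m there are x_i ∈ U_i and a, k with T^{a+jk} x_i ∈ V_i for all 0 ≤ j ≤ m and 1 ≤ i ≤ n. -/

import Mathlib

open Filter Topology

theorem twofold_AP_transitive_implies_nfold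
    {X : Type*} [AddCommGroup X] [Module ℝ X] [UniformSpace X] [IsUniformAddGroup X]
    [ContinuousSMul ℝ X] [LocallyConvexSpace ℝ X] [CompleteSpace X]
    [TopologicalSpace.MetrizableSpace X] [TopologicalSpace.SeparableSpace X]
    (T : X →L[ℝ] X)
    (h2 : ∀ U₁ U₂ V₁ V₂ : Set X, IsOpen U₁ → U₁.Nonempty → IsOpen U₂ → U₂.Nonempty →
        IsOpen V₁ → V₁.Nonempty → IsOpen V₂ → V₂.Nonempty → ∀ m : ℕ,
        ∃ x₁ ∈ U₁, ∃ x₂ ∈ U₂, ∃ a k : ℕ, 1 ≤ k ∧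
          ∀ j ≤ m, (T ^ (a + j * k)) x₁ ∈ V₁ ∧ (T ^ (a + j * k)) x₂ ∈ V₂) :
    ∀ n : ℕ, 1 ≤ n → ∀ U V : Fin n → Set X,
      (∀ i, IsOpen (U i)) → (∀ i, (U i).Nonempty) →
      (∀ i, IsOpen (V i)) → (∀ i, (V i).Nonempty) → ∀ m : ℕ,
      ∃ x : Fin n → X, ∃ a k : ℕ, 1 ≤ k ∧
        ∀ i, x i ∈ U i ∧ ∀ j ≤ m, (T ^ (a + j * k)) (x i) ∈ V i := by
  have key : ∀ (p c : ℕ) (z : X), (T ^ p) ((T ^ c) z) = (T ^ c) ((T ^ p) z) := by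
    intro p c z
    rw [← ContinuousLinearMap.mul_apply, ← ContinuousLinearMap.mul_apply,
      ← pow_add, ← pow_add, add_comm]
  have main : ∀ n : ℕ, ∀ U V : Fin n → Set X,
      (∀ i, IsOpen (U i)) → (∀ i, (U i).Nonempty) →
      (∀ i, IsOpen (V i)) → (∀ i, (V i).Nonempty) → ∀ m : ℕ,
      ∃ x : Fin n → X, ∃ a k : ℕ, 1 ≤ k ∧
        ∀ i, x i ∈ U i ∧ ∀ j ≤ m, (T ^ (a + j * k)) (x i) ∈ V i := by
    intro n
    induction n with
    | zero =>
      intro U V _ _ _ _ m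
      exact ⟨Fin.elim0, 0, 1, le_rfl, fun i => i.elim0⟩
    | succ n IH =>
      match n, IH with
      | 0, _ =>
        intro U V hUo hUne hVo hVne m
        obtain ⟨x₁, hx₁, x₂, hx₂, a, k, hk, h⟩ :=
          h2 (U 0) (U 0) (V 0) (V 0) (hUo 0) (hUne 0) (hUo 0) (hUne 0)
            (hVo 0) (hVne 0) (hVo 0) (hVne 0) m
        refine ⟨fun _ => x₁, a, k, hk, fun i => ?_⟩
        have hi : i = 0 := by apply Fin.ext; omega
        subst hi
        exact ⟨hx₁, fun j hj => (h j hj).1⟩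
      | n + 1, IH =>
        intro U V hUo hUne hVo hVne m
        have hn0 : n < n + 2 := by omega
        have hn1 : n + 1 < n + 2 := by omega
        set i₀ : Fin (n + 2) := ⟨n, hn0⟩ with hi₀
        set i₁ : Fin (n + 2) := ⟨n + 1, hn1⟩ with hi₁
        obtain ⟨y₁, hy₁, y₂, hy₂, c, k₀, hk₀, hc⟩ :=
          h2 (U i₀) (V i₀) (U i₁) (V i₁) (hUo i₀) (hUne i₀) (hVo i₀) (hVne i₀)
            (hUo i₁) (hUne i₁) (hVo i₁) (hVne i₁) 0
        obtain ⟨hcy₁, hcy₂⟩ := hc 0 le_rfl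
        simp only [Nat.zero_mul, Nat.add_zero] at hcy₁ hcy₂
        set U' : Fin (n + 1) → Set X := fun i =>
          if h : (i : ℕ) < n then U ⟨i, by omega⟩
          else U i₀ ∩ (T ^ c) ⁻¹' (U i₁) with hU'
        set V' : Fin (n + 1) → Set X := fun i =>
          if h : (i : ℕ) < n then V ⟨i, by omega⟩
          else V i₀ ∩ (T ^ c) ⁻¹' (V i₁) with hV'
        have hU'o : ∀ i, IsOpen (U' i) := by
          intro i
          by_cases h : (i : ℕ) < n
          · simp only [hU', h, dif_pos]; exact hUo _
          · simp only [hU', h, dif_neg, not_false_iff]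
            exact (hUo i₀).inter ((hUo i₁).preimage (T ^ c).continuous)
        have hV'o : ∀ i, IsOpen (V' i) := by
          intro i
          by_cases h : (i : ℕ) < n
          · simp only [hV', h, dif_pos]; exact hVo _
          · simp only [hV', h, dif_neg, not_false_iff]
            exact (hVo i₀).inter ((hVo i₁).preimage (T ^ c).continuous)
        have hU'ne : ∀ i, (U' i).Nonempty := by
          intro i
          by_cases h : (i : ℕ) < n
          · simp only [hU', h, dif_pos]; exact hUne _
          · simp only [hU', h, dif_neg, not_false_iff]
            exact ⟨y₁, hy₁, hcy₁⟩
        have hV'ne : ∀ i, (V' i).Nonempty := by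
          intro i
          by_cases h : (i : ℕ) < n
          · simp only [hV', h, dif_pos]; exact hVne _
          · simp only [hV', h, dif_neg, not_false_iff]
            exact ⟨y₂, hy₂, hcy₂⟩
        obtain ⟨x', a, k, hk, hx'⟩ := IH U' V' hU'o hU'ne hV'o hV'ne m
        have hlast : ¬ ((Fin.last n : ℕ) < n) := by simp
        have hUlast := (hx' (Fin.last n)).1
        simp only [hU', dif_neg hlast] at hUlast
        have hVlast : ∀ j ≤ m, (T ^ (a + j * k)) (x' (Fin.last n)) ∈
            V i₀ ∩ (T ^ c) ⁻¹' (V i₁) := by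
          intro j hj
          have := (hx' (Fin.last n)).2 j hj
          simpa only [hV', dif_neg hlast] using this
        refine ⟨fun i => if h : (i : ℕ) < n + 1 then x' ⟨i, h⟩
          else (T ^ c) (x' (Fin.last n)), a, k, hk, fun i => ?_⟩
        by_cases h1 : (i : ℕ) < n
        · have h2' : (i : ℕ) < n + 1 := by omega
          simp only [dif_pos h2']
          have hm := hx' ⟨i, h2'⟩
          simp only [hU', hV', dif_pos h1] at hm
          have hie : (⟨(i : ℕ), by omega⟩ : Fin (n + 2)) = i := by
            apply Fin.ext; rfl
          rw [hie] at hm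
          exact hm
        · by_cases h2' : (i : ℕ) < n + 1
          · -- i = i₀
            have hie : i = i₀ := by apply Fin.ext; simp only [hi₀]; omega
            subst hie
            simp only [dif_pos h2']
            have hmk : (⟨(i₀ : ℕ), h2'⟩ : Fin (n + 1)) = Fin.last n := by
              apply Fin.ext; rfl
            rw [hmk]
            exact ⟨hUlast.1, fun j hj => (hVlast j hj).1⟩
          · -- i = i₁
            have hie : i = i₁ := by
              apply Fin.ext; simp only [hi₁]; omega
            subst hie
            simp only [dif_neg h2']
            refine ⟨hUlast.2, fun j hj => ?_⟩
            rw [key]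
            exact (hVlast j hj).2
  intro n _ U V hUo hUne hVo hVne m
  exact main n U V hUo hUne hVo hVne m
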